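/- For approximate isometries φ, ψ : X ⇝ Y, one has ψ < φ (φ strictly coarsens ψ) if and only if there exist finite sets X₀ ⊆ X, Y₀ ⊆ Y and ε > 0 such that φ ≥ ψ|_{X₀×Y₀} + ε, where ψ|_{X₀×Y₀} denotes the trivial extension to X ⇝ Y of the restriction of ψ to X₀ × Y₀. -/

import Mathlib

open scoped ENNReal

/-- A Katětov function on a metric space, with values in `[0,∞]`. -/
def Katetov {X : Type*} [MetricSpace X] (ψ : X → ℝ≥0∞) : Prop :=
  ∀ x y : X, ψ x ≤ ENNReal.ofReal (dist x y) + ψ y ∧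
    ENNReal.ofReal (dist x y) ≤ ψ x + ψ y

/-- An approximate isometry `X ⇝ Y`: a bi-Katětov function `X × Y → [0,∞]`. -/
def BiKatetov {X Y : Type*} [MetricSpace X] [MetricSpace Y]
    (ψ : X × Y → ℝ≥0∞) : Prop :=
  (∀ y, Katetov fun x => ψ (x, y)) ∧ (∀ x, Katetov fun y => ψ (x, y))

/-- The composition `φψ(x,z) = inf_y (ψ(x,y) + φ(y,z))` of approximate
isometries `ψ : X ⇝ Y` and `φ : Y ⇝ Z`. -/
noncomputable def ApxComp {X Y Z : Type*} [MetricSpace X] [MetricSpace Y]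
    [MetricSpace Z] (ψ : X × Y → ℝ≥0∞) (φ : Y × Z → ℝ≥0∞) :
    X × Z → ℝ≥0∞ :=
  fun p => ⨅ y : Y, ψ (p.1, y) + φ (y, p.2)

/-- The pseudo-inverse `ψ*(y,x) = ψ(x,y)`. -/
def ApxInv {X Y : Type*} (ψ : X × Y → ℝ≥0∞) : Y × X → ℝ≥0∞ :=
  fun p => ψ (p.2, p.1)

/-- The space of approximate isometries from `X` to `Y`, topologised as a
subspace of the product `[0,∞]^{X×Y}`. -/
def Apx (X Y : Type*) [MetricSpace X] [MetricSpace Y] :=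
  {ψ : X × Y → ℝ≥0∞ // BiKatetov ψ}

instance (X Y : Type*) [MetricSpace X] [MetricSpace Y] :
    TopologicalSpace (Apx X Y) :=
  instTopologicalSpaceSubtype

/-- The trivial extension to `X ⇝ Y` of the restriction of `ψ` to `X₀ × Y₀`. -/
noncomputable def trivExt {X Y : Type*} [MetricSpace X] [MetricSpace Y]
    (X₀ : Set X) (Y₀ : Set Y) (ψ : X × Y → ℝ≥0∞) : X × Y → ℝ≥0∞ :=
  fun p => ⨅ x₀ ∈ X₀, ⨅ y₀ ∈ Y₀,
    ENNReal.ofReal (dist p.1 x₀) + ψ (x₀, y₀) + ENNReal.ofReal (dist y₀ p.2)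

-- auxiliary lemmas
section helpers
variable {X Y : Type*} [MetricSpace X] [MetricSpace Y]

local notation "D" => fun a b => ENNReal.ofReal (dist a b)

lemma oD_triangle {Z : Type*} [MetricSpace Z] (x y z : Z) :
    ENNReal.ofReal (dist x z) ≤ ENNReal.ofReal (dist x y) + ENNReal.ofReal (dist y z) := by
  rw [← ENNReal.ofReal_add dist_nonneg dist_nonneg]
  exact ENNReal.ofReal_le_ofReal (dist_triangle x y z)

lemma oD_comm {Z : Type*} [MetricSpace Z] (x y : Z) :
    ENNReal.ofReal (dist x y) = ENNReal.ofReal (dist y x) := by rw [dist_comm]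

lemma biKatetov_ub {ψ : X × Y → ℝ≥0∞} (h : BiKatetov ψ) (x x₀ : X) (y₀ y : Y) :
    ψ (x, y) ≤ ENNReal.ofReal (dist x x₀) + ψ (x₀, y₀) + ENNReal.ofReal (dist y₀ y) := by
  calc ψ (x, y) ≤ ENNReal.ofReal (dist x x₀) + ψ (x₀, y) := (h.1 y x x₀).1
    _ ≤ ENNReal.ofReal (dist x x₀) + (ENNReal.ofReal (dist y y₀) + ψ (x₀, y₀)) :=
        add_le_add_right ((h.2 x₀ y y₀).1) _
    _ = ENNReal.ofReal (dist x x₀) + ψ (x₀, y₀) + ENNReal.ofReal (dist y₀ y) := by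
        rw [oD_comm y y₀]; ring

lemma biKatetov_lbX {ψ : X × Y → ℝ≥0∞} (h : BiKatetov ψ) (x x' : X) (y y' : Y) :
    ENNReal.ofReal (dist x x') ≤ ψ (x, y) + ENNReal.ofReal (dist y y') + ψ (x', y') := by
  calc ENNReal.ofReal (dist x x') ≤ ψ (x, y') + ψ (x', y') := (h.1 y' x x').2
    _ ≤ (ENNReal.ofReal (dist y' y) + ψ (x, y)) + ψ (x', y') :=
        add_le_add_left ((h.2 x y' y).1) _
    _ = ψ (x, y) + ENNReal.ofReal (dist y y') + ψ (x', y') := by rw [oD_comm y' y]; ring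

lemma biKatetov_lbY {ψ : X × Y → ℝ≥0∞} (h : BiKatetov ψ) (x x' : X) (y y' : Y) :
    ENNReal.ofReal (dist y y') ≤ ψ (x, y) + ENNReal.ofReal (dist x x') + ψ (x', y') := by
  calc ENNReal.ofReal (dist y y') ≤ ψ (x', y) + ψ (x', y') := (h.2 x' y y').2
    _ ≤ (ENNReal.ofReal (dist x' x) + ψ (x, y)) + ψ (x', y') :=
        add_le_add_left ((h.1 y x' x).1) _
    _ = ψ (x, y) + ENNReal.ofReal (dist x x') + ψ (x', y') := by rw [oD_comm x' x]; ring

lemma le_trivExt {ψ : X × Y → ℝ≥0∞} (h : BiKatetov ψ) (X₀ : Set X) (Y₀ : Set Y)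
    (p : X × Y) : ψ p ≤ trivExt X₀ Y₀ ψ p := by
  refine le_iInf₂ fun x₀ _ => le_iInf₂ fun y₀ _ => ?_
  exact biKatetov_ub h p.1 x₀ y₀ p.2

lemma trivExt_le_self {ψ : X × Y → ℝ≥0∞} {X₀ : Set X} {Y₀ : Set Y}
    {p : X × Y} (hx : p.1 ∈ X₀) (hy : p.2 ∈ Y₀) : trivExt X₀ Y₀ ψ p ≤ ψ p := by
  have := iInf₂_le (f := fun x₀ (_ : x₀ ∈ X₀) => ⨅ y₀ ∈ Y₀,
    ENNReal.ofReal (dist p.1 x₀) + ψ (x₀, y₀) + ENNReal.ofReal (dist y₀ p.2)) p.1 hx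
  refine le_trans (le_trans this (iInf₂_le p.2 hy)) ?_
  simp [dist_self]

lemma biKatetov_trivExt {ψ : X × Y → ℝ≥0∞} (h : BiKatetov ψ) (X₀ : Set X) (Y₀ : Set Y) :
    BiKatetov (trivExt X₀ Y₀ ψ) := by
  constructor
  · intro y x x'
    constructor
    · simp only [trivExt, ENNReal.add_iInf]
      refine le_iInf₂ fun x₀ hx₀ => le_iInf₂ fun y₀ hy₀ => ?_
      refine le_trans (iInf₂_le x₀ hx₀) (le_trans (iInf₂_le y₀ hy₀) ?_)
      calc ENNReal.ofReal (dist x x₀) + ψ (x₀, y₀) + ENNReal.ofReal (dist y₀ y)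
          ≤ (ENNReal.ofReal (dist x x') + ENNReal.ofReal (dist x' x₀)) + ψ (x₀, y₀)
              + ENNReal.ofReal (dist y₀ y) :=
            add_le_add_left (add_le_add_left (oD_triangle x x' x₀) _) _
        _ = ENNReal.ofReal (dist x x') + (ENNReal.ofReal (dist x' x₀) + ψ (x₀, y₀)
              + ENNReal.ofReal (dist y₀ y)) := by ring
    · simp only [trivExt, ENNReal.add_iInf, ENNReal.iInf_add]
      refine le_iInf₂ fun x₀ hx₀ => le_iInf₂ fun y₀ hy₀ => ?_
      refine le_iInf₂ fun x₀' hx₀' => le_iInf₂ fun y₀' hy₀' => ?_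
      calc ENNReal.ofReal (dist x x')
          ≤ ENNReal.ofReal (dist x x₀') + ENNReal.ofReal (dist x₀' x') :=
            oD_triangle x x₀' x'
        _ ≤ ENNReal.ofReal (dist x x₀') +
              (ENNReal.ofReal (dist x₀' x₀) + ENNReal.ofReal (dist x₀ x')) :=
            add_le_add_right (oD_triangle x₀' x₀ x') _
        _ ≤ ENNReal.ofReal (dist x x₀') +
              ((ψ (x₀', y₀') + ENNReal.ofReal (dist y₀' y₀) + ψ (x₀, y₀))
                + ENNReal.ofReal (dist x₀ x')) :=
            add_le_add_right (add_le_add_left (biKatetov_lbX h x₀' x₀ y₀' y₀) _) _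
        _ ≤ ENNReal.ofReal (dist x x₀') +
              ((ψ (x₀', y₀') + (ENNReal.ofReal (dist y₀' y) + ENNReal.ofReal (dist y y₀))
                + ψ (x₀, y₀))
                + ENNReal.ofReal (dist x₀ x')) := by
            gcongr
            exact oD_triangle y₀' y y₀
        _ = (ENNReal.ofReal (dist x x₀') + ψ (x₀', y₀') + ENNReal.ofReal (dist y₀' y)) +
              (ENNReal.ofReal (dist x' x₀) + ψ (x₀, y₀) + ENNReal.ofReal (dist y₀ y)) := by
            rw [oD_comm y y₀, oD_comm x₀ x']; ring
  · intro x y y'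
    constructor
    · simp only [trivExt, ENNReal.add_iInf]
      refine le_iInf₂ fun x₀ hx₀ => le_iInf₂ fun y₀ hy₀ => ?_
      refine le_trans (iInf₂_le x₀ hx₀) (le_trans (iInf₂_le y₀ hy₀) ?_)
      calc ENNReal.ofReal (dist x x₀) + ψ (x₀, y₀) + ENNReal.ofReal (dist y₀ y)
          ≤ ENNReal.ofReal (dist x x₀) + ψ (x₀, y₀)
              + (ENNReal.ofReal (dist y₀ y') + ENNReal.ofReal (dist y' y)) :=
            add_le_add_right (oD_triangle y₀ y' y) _
        _ = ENNReal.ofReal (dist y y') + (ENNReal.ofReal (dist x x₀) + ψ (x₀, y₀)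
              + ENNReal.ofReal (dist y₀ y')) := by rw [oD_comm y' y]; ring
    · simp only [trivExt, ENNReal.add_iInf, ENNReal.iInf_add]
      refine le_iInf₂ fun x₀ hx₀ => le_iInf₂ fun y₀ hy₀ => ?_
      refine le_iInf₂ fun x₀' hx₀' => le_iInf₂ fun y₀' hy₀' => ?_
      calc ENNReal.ofReal (dist y y')
          ≤ ENNReal.ofReal (dist y y₀') + ENNReal.ofReal (dist y₀' y') :=
            oD_triangle y y₀' y'
        _ ≤ ENNReal.ofReal (dist y y₀') +
              (ENNReal.ofReal (dist y₀' y₀) + ENNReal.ofReal (dist y₀ y')) :=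
            add_le_add_right (oD_triangle y₀' y₀ y') _
        _ ≤ ENNReal.ofReal (dist y y₀') +
              ((ψ (x₀', y₀') + ENNReal.ofReal (dist x₀' x₀) + ψ (x₀, y₀))
                + ENNReal.ofReal (dist y₀ y')) :=
            add_le_add_right (add_le_add_left (biKatetov_lbY h x₀' x₀ y₀' y₀) _) _
        _ ≤ ENNReal.ofReal (dist y y₀') +
              ((ψ (x₀', y₀') + (ENNReal.ofReal (dist x₀' x) + ENNReal.ofReal (dist x x₀))
                + ψ (x₀, y₀))
                + ENNReal.ofReal (dist y₀ y')) := by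
            gcongr
            exact oD_triangle x₀' x x₀
        _ = (ENNReal.ofReal (dist x x₀') + ψ (x₀', y₀') + ENNReal.ofReal (dist y₀' y)) +
              (ENNReal.ofReal (dist x x₀) + ψ (x₀, y₀) + ENNReal.ofReal (dist y₀ y')) := by
            rw [oD_comm y y₀', oD_comm x₀' x]; ring

end helpers

section main
variable {X Y : Type*} [MetricSpace X] [MetricSpace Y]

lemma biKatetov_add_const {ψ : X × Y → ℝ≥0∞} (h : BiKatetov ψ) (δ : ℝ≥0∞) :
    BiKatetov fun q => ψ q + δ := by
  refine ⟨fun y x x' => ⟨?_, ?_⟩, fun x y y' => ⟨?_, ?_⟩⟩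
  · calc ψ (x, y) + δ ≤ (ENNReal.ofReal (dist x x') + ψ (x', y)) + δ :=
        add_le_add_left (h.1 y x x').1 δ
      _ = ENNReal.ofReal (dist x x') + (ψ (x', y) + δ) := by ring
  · exact le_trans (h.1 y x x').2 (add_le_add (self_le_add_right _ _) (self_le_add_right _ _))
  · calc ψ (x, y) + δ ≤ (ENNReal.ofReal (dist y y') + ψ (x, y')) + δ :=
        add_le_add_left (h.2 x y y').1 δ
      _ = ENNReal.ofReal (dist y y') + (ψ (x, y') + δ) := by ring
  · exact le_trans (h.2 x y y').2 (add_le_add (self_le_add_right _ _) (self_le_add_right _ _))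

lemma exists_Icc_subset {a : ℝ≥0∞} {W : Set ℝ≥0∞} (hW : W ∈ nhds a) :
    ∃ δ : ℝ≥0∞, 0 < δ ∧ δ ≠ ∞ ∧ Set.Icc a (a + δ) ⊆ W := by
  by_cases ha : a = ∞
  · refine ⟨1, zero_lt_one, ENNReal.one_ne_top, fun x hx => ?_⟩
    have : x = a := le_antisymm (le_top.trans_eq ha.symm) (ha ▸ hx.1)
    exact this ▸ mem_of_mem_nhds hW
  · obtain ⟨ε, hε, hsub⟩ := (ENNReal.hasBasis_nhds_of_ne_top ha).mem_iff.1 hW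
    refine ⟨min ε 1, lt_min hε zero_lt_one, ((min_le_right _ _).trans_lt ENNReal.one_lt_top).ne, ?_⟩
    refine Set.Icc_subset_Icc tsub_le_self (add_le_add_right (min_le_left _ _) a) |>.trans hsub

lemma trivExt_le_trivExt_add {ψ ρ : X × Y → ℝ≥0∞} {X₀ : Set X} {Y₀ : Set Y} {δ : ℝ≥0∞}
    (hle : ∀ x₀ ∈ X₀, ∀ y₀ ∈ Y₀, ρ (x₀, y₀) ≤ ψ (x₀, y₀) + δ) (q : X × Y) :
    trivExt X₀ Y₀ ρ q ≤ trivExt X₀ Y₀ ψ q + δ := by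
  simp only [trivExt, ENNReal.iInf_add]
  refine le_iInf₂ fun x₀ hx₀ => le_iInf₂ fun y₀ hy₀ => ?_
  refine le_trans (le_trans (iInf₂_le x₀ hx₀) (iInf₂_le y₀ hy₀)) ?_
  calc ENNReal.ofReal (dist q.1 x₀) + ρ (x₀, y₀) + ENNReal.ofReal (dist y₀ q.2)
      ≤ ENNReal.ofReal (dist q.1 x₀) + (ψ (x₀, y₀) + δ) + ENNReal.ofReal (dist y₀ q.2) :=
        add_le_add_left (add_le_add_right (hle x₀ hx₀ y₀ hy₀) _) _
    _ = ENNReal.ofReal (dist q.1 x₀) + ψ (x₀, y₀) + ENNReal.ofReal (dist y₀ q.2) + δ := by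
        ring

end main

/-- `ψ < φ` (i.e. `ψ` lies in the interior of `{ρ : ρ ≤ φ}` in `Apx(X,Y)`)
iff there are finite `X₀ ⊆ X`, `Y₀ ⊆ Y` and `ε > 0` with
`φ ≥ ψ|_{X₀×Y₀} + ε`. -/
theorem strict_coarsening_iff {X Y : Type*} [MetricSpace X] [MetricSpace Y]
    (ψ φ : Apx X Y) :
    ψ ∈ interior {ρ : Apx X Y | ∀ p, ρ.1 p ≤ φ.1 p} ↔
      ∃ (X₀ : Set X) (Y₀ : Set Y), X₀.Finite ∧ Y₀.Finite ∧
        ∃ ε : ℝ, 0 < ε ∧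
          ∀ p, trivExt X₀ Y₀ ψ.1 p + ENNReal.ofReal ε ≤ φ.1 p := by
  constructor
  · -- forward direction
    intro h
    rw [mem_interior_iff_mem_nhds] at h
    obtain ⟨x0, hx0⟩ := ψ
    change {ρ : {ψ : X × Y → ℝ≥0∞ // BiKatetov ψ} | ∀ p, ρ.1 p ≤ φ.1 p} ∈
      nhds (⟨x0, hx0⟩ : {ψ : X × Y → ℝ≥0∞ // BiKatetov ψ}) at h
    rw [nhds_subtype_eq_comap] at h
    obtain ⟨V, hV, hVsub⟩ := Filter.mem_comap.1 h
    rw [nhds_pi, Filter.mem_pi] at hV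
    obtain ⟨I, hIfin, t, ht, hIt⟩ := hV
    have hdelta : ∀ p : X × Y, ∃ δ : ℝ≥0∞, 0 < δ ∧ δ ≠ ∞ ∧
        (p ∈ I → Set.Icc (x0 p) (x0 p + δ) ⊆ t p) := by
      intro p
      obtain ⟨δ, hδ0, hδt, hδsub⟩ := exists_Icc_subset (ht p)
      exact ⟨δ, hδ0, hδt, fun _ => hδsub⟩
    choose δf hδ0 hδt hδsub using hdelta
    set s : Finset (X × Y) := hIfin.toFinset with hs
    set δ : ℝ≥0∞ := min 1 (s.inf δf) with hδ
    have hδpos : 0 < δ := by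
      refine lt_min zero_lt_one ?_
      rw [Finset.lt_inf_iff ENNReal.zero_lt_top]
      exact fun p _ => hδ0 p
    have hδtop : δ ≠ ∞ := ((min_le_left _ _).trans_lt ENNReal.one_lt_top).ne
    set X₀ : Set X := Prod.fst '' I with hX₀
    set Y₀ : Set Y := Prod.snd '' I with hY₀
    set χ : X × Y → ℝ≥0∞ := fun q => x0 q + δ with hχdef
    have hχ : BiKatetov χ := biKatetov_add_const hx0 δ
    have hρbk : BiKatetov (trivExt X₀ Y₀ χ) := biKatetov_trivExt hχ X₀ Y₀
    have hmem : trivExt X₀ Y₀ χ ∈ Set.pi I t := by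
      intro p hp
      refine hδsub p hp ⟨?_, ?_⟩
      · exact le_trans (self_le_add_right _ _) (le_trivExt hχ X₀ Y₀ p)
      · have h1 : trivExt X₀ Y₀ χ p ≤ χ p :=
          trivExt_le_self (X₀ := X₀) (Y₀ := Y₀) ⟨p, hp, rfl⟩ ⟨p, hp, rfl⟩
        refine h1.trans (add_le_add_right ?_ _)
        exact (min_le_right _ _).trans (Finset.inf_le (hIfin.mem_toFinset.2 hp))
    have hρS : (⟨trivExt X₀ Y₀ χ, hρbk⟩ : Apx X Y) ∈ {ρ : Apx X Y | ∀ p, ρ.1 p ≤ φ.1 p} :=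
      hVsub (hIt hmem)
    have hρle : ∀ q, trivExt X₀ Y₀ χ q ≤ φ.1 q := hρS
    refine ⟨X₀, Y₀, hIfin.image _, hIfin.image _, δ.toReal,
      ENNReal.toReal_pos hδpos.ne' hδtop, fun q => ?_⟩
    rw [ENNReal.ofReal_toReal hδtop]
    refine le_trans ?_ (hρle q)
    have := trivExt_le_trivExt_add (ψ := x0) (ρ := χ) (X₀ := X₀) (Y₀ := Y₀) (δ := δ)
      (fun x₀ _ y₀ _ => le_rfl) q
    -- we need the reverse: trivExt ψ + δ ≤ trivExt χ
    simp only [trivExt, ENNReal.iInf_add]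
    refine le_iInf₂ fun x₀ hx₀ => le_iInf₂ fun y₀ hy₀ => ?_
    refine le_trans (le_trans (iInf₂_le x₀ hx₀) (iInf₂_le y₀ hy₀)) ?_
    show ENNReal.ofReal (dist q.1 x₀) + x0 (x₀, y₀) + ENNReal.ofReal (dist y₀ q.2) + δ ≤
      ENNReal.ofReal (dist q.1 x₀) + (x0 (x₀, y₀) + δ) + ENNReal.ofReal (dist y₀ q.2)
    apply le_of_eq; ring
  · -- reverse direction
    rintro ⟨X₀, Y₀, hX₀, hY₀, ε, hε, hφ⟩
    set T : X → Y → Set ℝ≥0∞ := fun x₀ y₀ =>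
      if ψ.1 (x₀, y₀) = ∞ then Set.univ else Set.Iio (ψ.1 (x₀, y₀) + ENNReal.ofReal ε) with hT
    set V : Set (X × Y → ℝ≥0∞) :=
      ⋂ x₀ ∈ X₀, ⋂ y₀ ∈ Y₀, (fun f : X × Y → ℝ≥0∞ => f (x₀, y₀)) ⁻¹' T x₀ y₀ with hV
    have hVopen : IsOpen V := by
      refine hX₀.isOpen_biInter fun x₀ _ => hY₀.isOpen_biInter fun y₀ _ => ?_
      refine (continuous_apply (x₀, y₀)).isOpen_preimage _ ?_
      rw [hT]; dsimp only
      split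
      · exact isOpen_univ
      · exact isOpen_Iio
    rw [mem_interior]
    refine ⟨Subtype.val ⁻¹' V, ?_, hVopen.preimage continuous_subtype_val, ?_⟩
    · rintro ρ hρ q
      change ρ.1 ∈ V at hρ
      simp only [Set.mem_preimage, hV, Set.mem_iInter] at hρ
      have key : ∀ x₀ ∈ X₀, ∀ y₀ ∈ Y₀, ρ.1 (x₀, y₀) ≤ ψ.1 (x₀, y₀) + ENNReal.ofReal ε := by
        intro x₀ hx₀ y₀ hy₀
        have := hρ x₀ hx₀ y₀ hy₀
        rw [hT] at this; dsimp only at this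
        split at this
        · next hinf => rw [hinf]; exact le_top.trans le_self_add
        · exact this.le
      calc ρ.1 q ≤ trivExt X₀ Y₀ ρ.1 q := le_trivExt ρ.2 X₀ Y₀ q
        _ ≤ trivExt X₀ Y₀ ψ.1 q + ENNReal.ofReal ε := trivExt_le_trivExt_add key q
        _ ≤ φ.1 q := hφ q
    · change ψ.1 ∈ V
      simp only [Set.mem_preimage, hV, Set.mem_iInter]
      intro x₀ hx₀ y₀ hy₀
      rw [hT]; dsimp only
      split
      · exact Set.mem_univ _
      · next hfin =>
        exact ENNReal.lt_add_right hfin (ENNReal.ofReal_pos.2 hε).ne'
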